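/- The value set of 1-forms does not determine the value semigroup for plane curves with two branches: for b ∈ ℂ* let D_{b} be the plane curve with branches parametrized by φ₁(t₁) = (t₁², t₁³ + t₁⁴) and φ₂(t₂) = (t₂², b·t₂³). Then for every b ∈ ℂ*, Λ_{D_b} = {(2,2),(3,3),(4,4),(5,5)} ∪ ((6,6)+ℕ²); whereas Γ_{D_b} = {(0,0)} ∪ {(a,a) : 2 ≤ a ≤ 7} ∪ {(6,6+k) : k ∈ ℕ} ∪ {(6+k,6) : k ∈ ℕ} ∪ ((8,8)+ℕ²) when b² ≠ 1, and Γ_{D_b} = {(0,0)} ∪ {(a,a) : 2 ≤ a ≤ 8} ∪ {(7,7+k) : k ∈ ℕ} ∪ {(7+k,7) : k ∈ ℕ} ∪ ((9,9)+ℕ²) when b² = 1; in particular there exist b, b' ∈ ℂ* with Λ_{D_b} = Λ_{D_{b'}} but Γ_{D_b} ≠ Γ_{D_{b'}}. -/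

import Mathlib

open PowerSeries

/-- Substitution of two power series (with zero constant term) into a
two-variable power series: `h(a, b)`. -/
noncomputable def subst2 (a b : PowerSeries ℂ) (h : MvPowerSeries (Fin 2) ℂ) :
    PowerSeries ℂ :=
  PowerSeries.mk fun k =>
    ∑ i ∈ Finset.range (k + 1), ∑ j ∈ Finset.range (k + 1),
      MvPowerSeries.coeff (Finsupp.single 0 i + Finsupp.single 1 j) h *
        PowerSeries.coeff k (a ^ i * b ^ j)

/-- Formal derivative with respect to `t`. -/
noncomputable def dt (f : PowerSeries ℂ) : PowerSeries ℂ :=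
  PowerSeries.mk fun k => (k + 1 : ℂ) * PowerSeries.coeff (k + 1) f

/-- The value semigroup of a plane curve with two branches, parametrized by
`φ₁ = (x₁, y₁)` and `φ₂ = (x₂, y₂)`: the set of pairs
`(ord_{t₁} φ₁*(h), ord_{t₂} φ₂*(h))` with `φ₁*(h) ≠ 0 ≠ φ₂*(h)`. -/
noncomputable def gammaTwo (x₁ y₁ x₂ y₂ : PowerSeries ℂ) : Set (ℕ × ℕ) :=
  {d | ∃ h : MvPowerSeries (Fin 2) ℂ, subst2 x₁ y₁ h ≠ 0 ∧ subst2 x₂ y₂ h ≠ 0 ∧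
    (subst2 x₁ y₁ h).order = (d.1 : ℕ∞) ∧ (subst2 x₂ y₂ h).order = (d.2 : ℕ∞)}

/-- The value set of 1-forms of a plane curve with two branches: the set of
pairs `(ord_{t₁}(t₁·φ₁*(ω)), ord_{t₂}(t₂·φ₂*(ω)))` with `φᵢ*(ω) ≠ 0`. -/
noncomputable def lambdaTwo (x₁ y₁ x₂ y₂ : PowerSeries ℂ) : Set (ℕ × ℕ) :=
  {d | ∃ A B : MvPowerSeries (Fin 2) ℂ,
    subst2 x₁ y₁ A * dt x₁ + subst2 x₁ y₁ B * dt y₁ ≠ 0 ∧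
    subst2 x₂ y₂ A * dt x₂ + subst2 x₂ y₂ B * dt y₂ ≠ 0 ∧
    (PowerSeries.X * (subst2 x₁ y₁ A * dt x₁ + subst2 x₁ y₁ B * dt y₁)).order
      = (d.1 : ℕ∞) ∧
    (PowerSeries.X * (subst2 x₂ y₂ A * dt x₂ + subst2 x₂ y₂ B * dt y₂)).order
      = (d.2 : ℕ∞)}


-- ======================= auxiliary lemmas =======================

lemma coeff_subst2 (a b : PowerSeries ℂ) (h : MvPowerSeries (Fin 2) ℂ) (k : ℕ) :
    PowerSeries.coeff k (subst2 a b h) =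
      ∑ i ∈ Finset.range (k + 1), ∑ j ∈ Finset.range (k + 1),
        MvPowerSeries.coeff (Finsupp.single 0 i + Finsupp.single 1 j) h *
          PowerSeries.coeff k (a ^ i * b ^ j) := by
  simp [subst2, PowerSeries.coeff_mk]

lemma subst2_add (a b : PowerSeries ℂ) (h g : MvPowerSeries (Fin 2) ℂ) :
    subst2 a b (h + g) = subst2 a b h + subst2 a b g := by
  ext k
  simp [coeff_subst2, add_mul, Finset.sum_add_distrib]

lemma single_pair_eq (i j i' j' : ℕ) :
    (Finsupp.single (0 : Fin 2) i' + Finsupp.single 1 j' =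
      Finsupp.single 0 i + Finsupp.single 1 j) ↔ (i' = i ∧ j' = j) := by
  constructor
  · intro hE
    constructor
    · have := DFunLike.congr_fun hE (0 : Fin 2)
      simpa using this
    · have := DFunLike.congr_fun hE (1 : Fin 2)
      simpa using this
  · rintro ⟨rfl, rfl⟩; rfl

lemma subst2_monomial (a b : PowerSeries ℂ) (ha : X ∣ a) (hb : X ∣ b) (i j : ℕ) (c : ℂ) :
    subst2 a b (MvPowerSeries.monomial (Finsupp.single 0 i + Finsupp.single 1 j) c)
      = C c * a ^ i * b ^ j := by
  ext k
  rw [coeff_subst2]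
  have key : ∀ i' ∈ Finset.range (k+1), ∀ j' ∈ Finset.range (k+1),
      (MvPowerSeries.coeff (Finsupp.single (0 : Fin 2) i' + Finsupp.single 1 j')
        (MvPowerSeries.monomial (Finsupp.single (0 : Fin 2) i + Finsupp.single 1 j) c)) *
        PowerSeries.coeff k (a ^ i' * b ^ j') =
      if i' = i ∧ j' = j then c * PowerSeries.coeff k (a ^ i * b ^ j) else 0 := by
    intro i' _ j' _
    rw [MvPowerSeries.coeff_monomial]
    simp only [single_pair_eq]
    split_ifs with hij
    · obtain ⟨rfl, rfl⟩ := hij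
      rfl
    · exact zero_mul _
  refine Eq.trans (Finset.sum_congr rfl fun i' hi' =>
    Finset.sum_congr rfl fun j' hj' => key i' hi' j' hj') ?_
  have hz0 : ¬(i ≤ k ∧ j ≤ k) → PowerSeries.coeff k (a ^ i * b ^ j) = 0 := by
    intro hnk
    have hdvd : (X : PowerSeries ℂ) ^ (i + j) ∣ a ^ i * b ^ j := by
      rw [pow_add]
      exact mul_dvd_mul (pow_dvd_pow_of_dvd ha i) (pow_dvd_pow_of_dvd hb j)
    exact X_pow_dvd_iff.mp hdvd k (by omega)
  by_cases hik : i ≤ k ∧ j ≤ k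
  · obtain ⟨hik, hjk⟩ := hik
    rw [Finset.sum_comm]
    rw [Finset.sum_eq_single j]
    · rw [Finset.sum_eq_single i]
      · rw [if_pos ⟨rfl, rfl⟩, mul_assoc, PowerSeries.coeff_C_mul]
      · intro i' _ hne; simp [hne]
      · intro habs; exact absurd (Finset.mem_range.mpr (Nat.lt_succ_of_le hik)) habs
    · intro j' _ hne
      apply Finset.sum_eq_zero; intro i' _
      simp [hne]
    · intro habs; exact absurd (Finset.mem_range.mpr (Nat.lt_succ_of_le hjk)) habs
  · have hz := hz0 hik
    rw [mul_assoc, PowerSeries.coeff_C_mul, hz, mul_zero]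
    apply Finset.sum_eq_zero; intro i' hi'
    apply Finset.sum_eq_zero; intro j' hj'
    have : ¬ (i' = i ∧ j' = j) := by
      rintro ⟨rfl, rfl⟩
      exact hik ⟨Nat.lt_succ_iff.mp (Finset.mem_range.mp hi'),
        Nat.lt_succ_iff.mp (Finset.mem_range.mp hj')⟩
    rw [if_neg this]

lemma coeff_xy1 (i j k : ℕ) :
    PowerSeries.coeff k ((X ^ 2) ^ i * (X ^ 3 + X ^ 4) ^ j) =
      if 2*i+3*j ≤ k then (j.choose (k - (2*i+3*j)) : ℂ) else 0 := by
  have h1 : ((X:PowerSeries ℂ) ^ 2) ^ i * (X ^ 3 + X ^ 4) ^ j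
      = X ^ (2*i+3*j) * (1 + X) ^ j := by
    have : (X:PowerSeries ℂ) ^ 3 + X ^ 4 = X ^ 3 * (1 + X) := by ring
    rw [this, mul_pow, ← pow_mul, ← pow_mul, ← mul_assoc, ← pow_add]
  rw [h1, PowerSeries.coeff_X_pow_mul']
  congr 1
  have h2 : ((1:PowerSeries ℂ) + X) ^ j
      = ((((1:Polynomial ℂ) + Polynomial.X) ^ j : Polynomial ℂ) : PowerSeries ℂ) := by
    push_cast
    norm_num
  rw [h2, Polynomial.coeff_coe, Polynomial.coeff_one_add_X_pow]

lemma coeff_xy2 (b : ℂ) (i j k : ℕ) :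
    PowerSeries.coeff k ((X ^ 2) ^ i * (C b * X ^ 3) ^ j) =
      if k = 2*i+3*j then b ^ j else 0 := by
  have h1 : ((X:PowerSeries ℂ) ^ 2) ^ i * (C b * X ^ 3) ^ j
      = C (b ^ j) * X ^ (2*i+3*j) := by
    rw [mul_pow, ← pow_mul, ← pow_mul, map_pow]
    ring_nf
  rw [h1, PowerSeries.coeff_C_mul, PowerSeries.coeff_X_pow]
  split_ifs <;> simp

noncomputable def cf (h : MvPowerSeries (Fin 2) ℂ) (i j : ℕ) : ℂ :=
  MvPowerSeries.coeff (Finsupp.single 0 i + Finsupp.single 1 j) h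

lemma coeff0_b1 (h : MvPowerSeries (Fin 2) ℂ) :
    PowerSeries.coeff 0 (subst2 (X^2) (X^3+X^4) h) = cf h 0 0 := by
  simp only [subst2, PowerSeries.coeff_mk, coeff_xy1, cf, Finset.sum_range_succ,
    Finset.sum_range_zero]
  norm_num [Nat.choose]
  try ring

lemma coeff0_b2 (b : ℂ) (h : MvPowerSeries (Fin 2) ℂ) :
    PowerSeries.coeff 0 (subst2 (X^2) (C b * X^3) h) = cf h 0 0 := by
  simp only [subst2, PowerSeries.coeff_mk, coeff_xy2, cf, Finset.sum_range_succ,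
    Finset.sum_range_zero]
  norm_num
  try ring

lemma coeff1_b1 (h : MvPowerSeries (Fin 2) ℂ) :
    PowerSeries.coeff 1 (subst2 (X^2) (X^3+X^4) h) = 0 := by
  simp only [subst2, PowerSeries.coeff_mk, coeff_xy1, cf, Finset.sum_range_succ,
    Finset.sum_range_zero]
  norm_num [Nat.choose]
  try ring

lemma coeff1_b2 (b : ℂ) (h : MvPowerSeries (Fin 2) ℂ) :
    PowerSeries.coeff 1 (subst2 (X^2) (C b * X^3) h) = 0 := by
  simp only [subst2, PowerSeries.coeff_mk, coeff_xy2, cf, Finset.sum_range_succ,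
    Finset.sum_range_zero]
  norm_num
  try ring

lemma coeff2_b1 (h : MvPowerSeries (Fin 2) ℂ) :
    PowerSeries.coeff 2 (subst2 (X^2) (X^3+X^4) h) = cf h 1 0 := by
  simp only [subst2, PowerSeries.coeff_mk, coeff_xy1, cf, Finset.sum_range_succ,
    Finset.sum_range_zero]
  norm_num [Nat.choose]
  try ring

lemma coeff2_b2 (b : ℂ) (h : MvPowerSeries (Fin 2) ℂ) :
    PowerSeries.coeff 2 (subst2 (X^2) (C b * X^3) h) = cf h 1 0 := by
  simp only [subst2, PowerSeries.coeff_mk, coeff_xy2, cf, Finset.sum_range_succ,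
    Finset.sum_range_zero]
  norm_num
  try ring

lemma coeff3_b1 (h : MvPowerSeries (Fin 2) ℂ) :
    PowerSeries.coeff 3 (subst2 (X^2) (X^3+X^4) h) = cf h 0 1 := by
  simp only [subst2, PowerSeries.coeff_mk, coeff_xy1, cf, Finset.sum_range_succ,
    Finset.sum_range_zero]
  norm_num [Nat.choose]
  try ring

lemma coeff3_b2 (b : ℂ) (h : MvPowerSeries (Fin 2) ℂ) :
    PowerSeries.coeff 3 (subst2 (X^2) (C b * X^3) h) = b * cf h 0 1 := by
  simp only [subst2, PowerSeries.coeff_mk, coeff_xy2, cf, Finset.sum_range_succ,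
    Finset.sum_range_zero]
  norm_num
  try ring

lemma coeff4_b1 (h : MvPowerSeries (Fin 2) ℂ) :
    PowerSeries.coeff 4 (subst2 (X^2) (X^3+X^4) h) = cf h 2 0 + cf h 0 1 := by
  simp only [subst2, PowerSeries.coeff_mk, coeff_xy1, cf, Finset.sum_range_succ,
    Finset.sum_range_zero]
  norm_num [Nat.choose]
  try ring

lemma coeff4_b2 (b : ℂ) (h : MvPowerSeries (Fin 2) ℂ) :
    PowerSeries.coeff 4 (subst2 (X^2) (C b * X^3) h) = cf h 2 0 := by
  simp only [subst2, PowerSeries.coeff_mk, coeff_xy2, cf, Finset.sum_range_succ,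
    Finset.sum_range_zero]
  norm_num
  try ring

lemma coeff5_b1 (h : MvPowerSeries (Fin 2) ℂ) :
    PowerSeries.coeff 5 (subst2 (X^2) (X^3+X^4) h) = cf h 1 1 := by
  simp only [subst2, PowerSeries.coeff_mk, coeff_xy1, cf, Finset.sum_range_succ,
    Finset.sum_range_zero]
  norm_num [Nat.choose]
  try ring

lemma coeff5_b2 (b : ℂ) (h : MvPowerSeries (Fin 2) ℂ) :
    PowerSeries.coeff 5 (subst2 (X^2) (C b * X^3) h) = b * cf h 1 1 := by
  simp only [subst2, PowerSeries.coeff_mk, coeff_xy2, cf, Finset.sum_range_succ,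
    Finset.sum_range_zero]
  norm_num
  try ring

lemma coeff6_b1 (h : MvPowerSeries (Fin 2) ℂ) :
    PowerSeries.coeff 6 (subst2 (X^2) (X^3+X^4) h) = cf h 3 0 + cf h 1 1 + cf h 0 2 := by
  simp only [subst2, PowerSeries.coeff_mk, coeff_xy1, cf, Finset.sum_range_succ,
    Finset.sum_range_zero]
  norm_num [Nat.choose]
  try ring

lemma coeff6_b2 (b : ℂ) (h : MvPowerSeries (Fin 2) ℂ) :
    PowerSeries.coeff 6 (subst2 (X^2) (C b * X^3) h) = cf h 3 0 + b^2 * cf h 0 2 := by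
  simp only [subst2, PowerSeries.coeff_mk, coeff_xy2, cf, Finset.sum_range_succ,
    Finset.sum_range_zero]
  norm_num
  try ring

lemma coeff7_b1 (h : MvPowerSeries (Fin 2) ℂ) :
    PowerSeries.coeff 7 (subst2 (X^2) (X^3+X^4) h) = cf h 2 1 + 2*cf h 0 2 := by
  simp only [subst2, PowerSeries.coeff_mk, coeff_xy1, cf, Finset.sum_range_succ,
    Finset.sum_range_zero]
  norm_num [Nat.choose]
  try ring

lemma coeff7_b2 (b : ℂ) (h : MvPowerSeries (Fin 2) ℂ) :
    PowerSeries.coeff 7 (subst2 (X^2) (C b * X^3) h) = b * cf h 2 1 := by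
  simp only [subst2, PowerSeries.coeff_mk, coeff_xy2, cf, Finset.sum_range_succ,
    Finset.sum_range_zero]
  norm_num
  try ring

lemma coeff8_b1 (h : MvPowerSeries (Fin 2) ℂ) :
    PowerSeries.coeff 8 (subst2 (X^2) (X^3+X^4) h) = cf h 4 0 + cf h 2 1 + cf h 0 2 + cf h 1 2 := by
  simp only [subst2, PowerSeries.coeff_mk, coeff_xy1, cf, Finset.sum_range_succ,
    Finset.sum_range_zero]
  norm_num [Nat.choose]
  try ring

lemma coeff8_b2 (b : ℂ) (h : MvPowerSeries (Fin 2) ℂ) :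
    PowerSeries.coeff 8 (subst2 (X^2) (C b * X^3) h) = cf h 4 0 + b^2 * cf h 1 2 := by
  simp only [subst2, PowerSeries.coeff_mk, coeff_xy2, cf, Finset.sum_range_succ,
    Finset.sum_range_zero]
  norm_num
  try ring


-- ======================= block 2: order utilities & monomials =======================

lemma xdvd1 : (X : PowerSeries ℂ) ∣ X^2 := dvd_pow_self X (by norm_num)
lemma xdvd2 : (X : PowerSeries ℂ) ∣ X^3 + X^4 := ⟨X^2 + X^3, by ring⟩
lemma xdvd3 (b : ℂ) : (X : PowerSeries ℂ) ∣ C b * X^3 := ⟨C b * X^2, by ring⟩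

noncomputable def mono (i j : ℕ) (c : ℂ) : MvPowerSeries (Fin 2) ℂ :=
  MvPowerSeries.monomial (Finsupp.single 0 i + Finsupp.single 1 j) c

lemma subst2_mono_b1 (i j : ℕ) (c : ℂ) :
    subst2 (X^2) (X^3+X^4) (mono i j c) = C c * (X^2)^i * (X^3+X^4)^j :=
  subst2_monomial _ _ xdvd1 xdvd2 i j c

lemma subst2_mono_b2 (b : ℂ) (i j : ℕ) (c : ℂ) :
    subst2 (X^2) (C b * X^3) (mono i j c) = C c * (X^2)^i * (C b * X^3)^j :=
  subst2_monomial _ _ xdvd1 (xdvd3 b) i j c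

lemma order_C' (c : ℂ) (hc : c ≠ 0) : (C c).order = 0 := by
  rw [show (0:ℕ∞) = ((0:ℕ):ℕ∞) from rfl, PowerSeries.order_eq_nat]
  exact ⟨by simpa using hc, fun i hi => absurd hi (by omega)⟩

lemma order_one_add_X_pow (j : ℕ) : ((1 + X : PowerSeries ℂ) ^ j).order = 0 := by
  rw [show (0:ℕ∞) = ((0:ℕ):ℕ∞) from rfl, PowerSeries.order_eq_nat]
  constructor
  · have h : PowerSeries.coeff 0 ((1 + X : PowerSeries ℂ) ^ j) = 1 := by
      simp [PowerSeries.coeff_zero_eq_constantCoeff, map_pow]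
    rw [h]; exact one_ne_zero
  · intro i hi; omega

lemma order_m1 (i j : ℕ) (c : ℂ) (hc : c ≠ 0) :
    ((C c * (X^2)^i * (X^3+X^4)^j : PowerSeries ℂ)).order = (2*i+3*j : ℕ) := by
  have h1 : (C c * (X^2)^i * (X^3+X^4)^j : PowerSeries ℂ)
      = C c * ((1+X)^j * X^(2*i+3*j)) := by
    have : (X:PowerSeries ℂ) ^ 3 + X ^ 4 = X ^ 3 * (1 + X) := by ring
    rw [this, mul_pow, ← pow_mul, ← pow_mul]
    ring
  rw [h1, PowerSeries.order_mul, PowerSeries.order_mul, PowerSeries.order_X_pow,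
    order_one_add_X_pow, order_C' c hc]
  simp

lemma order_m2 (b : ℂ) (hb : b ≠ 0) (i j : ℕ) (c : ℂ) (hc : c ≠ 0) :
    ((C c * (X^2)^i * (C b * X^3)^j : PowerSeries ℂ)).order = (2*i+3*j : ℕ) := by
  have h1 : (C c * (X^2)^i * (C b * X^3)^j : PowerSeries ℂ)
      = C (c * b^j) * X^(2*i+3*j) := by
    rw [mul_pow, ← pow_mul, ← pow_mul, map_mul, map_pow]
    ring
  rw [h1, PowerSeries.order_mul, PowerSeries.order_X_pow,
    order_C' _ (mul_ne_zero hc (pow_ne_zero _ hb))]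
  simp

noncomputable def mexp (k : ℕ) : ℕ × ℕ := if k % 2 = 0 then (k/2, 0) else ((k-3)/2, 1)

lemma mexp_spec {k : ℕ} (h : k ≠ 1) : 2*(mexp k).1 + 3*(mexp k).2 = k := by
  unfold mexp; split_ifs <;> simp <;> omega

lemma eq_of_coeffs {u : PowerSeries ℂ} {d N : ℕ} (hord : u.order = (d : ℕ∞))
    (hN : PowerSeries.coeff N u ≠ 0) (hc : ∀ m < N, PowerSeries.coeff m u = 0) :
    d = N := by
  have h2 : u.order = (N : ℕ∞) := PowerSeries.order_eq_nat.mpr ⟨hN, hc⟩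
  rw [hord] at h2
  exact_mod_cast h2

lemma ge_of_coeffs {u : PowerSeries ℂ} {d N : ℕ} (hord : u.order = (d : ℕ∞))
    (hc : ∀ m ≤ N, PowerSeries.coeff m u = 0) : N < d := by
  by_contra hlt
  push_neg at hlt
  have hd : PowerSeries.coeff d u ≠ 0 := by
    have h2 : u ≠ 0 := by
      intro h0
      rw [h0, PowerSeries.order_zero] at hord
      exact (by simp : ((d:ℕ∞) ≠ ⊤)) hord.symm
    have := PowerSeries.order_eq_nat.mp hord
    exact this.1
  exact hd (hc d hlt)

lemma ne_zero_of_order_nat {u : PowerSeries ℂ} {d : ℕ} (hord : u.order = (d : ℕ∞)) :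
    u ≠ 0 := by
  intro h0
  rw [h0, PowerSeries.order_zero] at hord
  exact (by simp : ((⊤:ℕ∞) ≠ (d:ℕ∞))) hord


-- ======================= block 3: curve equations and their substitutions =======================

/-- `f₁ = y² - x³ - 2x²y + x⁴` multiplied by the monomial `x^i y^j`. -/
noncomputable def F1m (i j : ℕ) : MvPowerSeries (Fin 2) ℂ :=
  mono i (j+2) 1 + mono (i+3) j (-1) + mono (i+2) (j+1) (-2) + mono (i+4) j 1

/-- `f₂ = y² - b²x³` multiplied by the monomial `x^i y^j`. -/
noncomputable def F2m (b : ℂ) (i j : ℕ) : MvPowerSeries (Fin 2) ℂ :=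
  mono i (j+2) 1 + mono (i+3) j (-(b^2))

lemma subst2_F1m_b1 (i j : ℕ) : subst2 (X^2) (X^3+X^4) (F1m i j) = 0 := by
  rw [F1m, subst2_add, subst2_add, subst2_add, subst2_mono_b1, subst2_mono_b1,
    subst2_mono_b1, subst2_mono_b1]
  simp only [map_one, map_neg, map_ofNat, one_mul, pow_add]
  ring

lemma subst2_F1m_b2 (b : ℂ) (i j : ℕ) : subst2 (X^2) (C b * X^3) (F1m i j) =
    (X^2)^i * (C b * X^3)^j * (C (b^2-1) * X^6 + C (-(2*b)) * X^7 + X^8) := by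
  rw [F1m, subst2_add, subst2_add, subst2_add, subst2_mono_b2, subst2_mono_b2,
    subst2_mono_b2, subst2_mono_b2]
  simp only [map_one, map_neg, map_sub, map_mul, map_pow, map_ofNat, one_mul, pow_add]
  ring

lemma subst2_F2m_b1 (b : ℂ) (i j : ℕ) : subst2 (X^2) (X^3+X^4) (F2m b i j) =
    (X^2)^i * (X^3+X^4)^j * (C (1-b^2) * X^6 + C 2 * X^7 + X^8) := by
  rw [F2m, subst2_add, subst2_mono_b1, subst2_mono_b1]
  simp only [map_one, map_neg, map_sub, map_mul, map_pow, map_ofNat, one_mul, pow_add]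
  ring

lemma subst2_F2m_b2 (b : ℂ) (i j : ℕ) : subst2 (X^2) (C b * X^3) (F2m b i j) = 0 := by
  rw [F2m, subst2_add, subst2_mono_b2, subst2_mono_b2]
  simp only [map_one, map_neg, map_pow, one_mul, pow_add]
  ring

/-- the order of `f₂(φ₁)`-factor. -/
lemma order_u1 (b : ℂ) (hb2 : b^2 ≠ 1) :
    (C (1-b^2) * X^6 + C 2 * X^7 + X^8 : PowerSeries ℂ).order = (6 : ℕ) := by
  rw [PowerSeries.order_eq_nat]
  constructor
  · simp only [map_add, PowerSeries.coeff_C_mul, PowerSeries.coeff_X_pow]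
    norm_num
    exact sub_ne_zero.mpr (Ne.symm hb2)
  · intro m hm
    simp only [map_add, PowerSeries.coeff_C_mul, PowerSeries.coeff_X_pow]
    have h6 : m ≠ 6 := by omega
    have h7 : m ≠ 7 := by omega
    have h8 : m ≠ 8 := by omega
    simp [h6, h7, h8]

lemma order_u1' (b : ℂ) (hb2 : b^2 = 1) :
    (C (1-b^2) * X^6 + C 2 * X^7 + X^8 : PowerSeries ℂ).order = (7 : ℕ) := by
  rw [PowerSeries.order_eq_nat]
  constructor
  · simp only [map_add, PowerSeries.coeff_C_mul, PowerSeries.coeff_X_pow]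
    norm_num
  · intro m hm
    simp only [map_add, PowerSeries.coeff_C_mul, PowerSeries.coeff_X_pow]
    have h6 : 1 - b^2 = 0 := by rw [hb2]; ring
    have h7 : m ≠ 7 := by omega
    have h8 : m ≠ 8 := by omega
    by_cases h6' : m = 6 <;> simp [h6, h6', h7, h8]

lemma order_u2 (b : ℂ) (hb2 : b^2 ≠ 1) :
    (C (b^2-1) * X^6 + C (-(2*b)) * X^7 + X^8 : PowerSeries ℂ).order = (6 : ℕ) := by
  rw [PowerSeries.order_eq_nat]
  constructor
  · simp only [map_add, PowerSeries.coeff_C_mul, PowerSeries.coeff_X_pow]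
    norm_num
    exact sub_ne_zero.mpr hb2
  · intro m hm
    simp only [map_add, PowerSeries.coeff_C_mul, PowerSeries.coeff_X_pow]
    have h6 : m ≠ 6 := by omega
    have h7 : m ≠ 7 := by omega
    have h8 : m ≠ 8 := by omega
    simp [h6, h7, h8]

lemma order_u2' (b : ℂ) (hb : b ≠ 0) (hb2 : b^2 = 1) :
    (C (b^2-1) * X^6 + C (-(2*b)) * X^7 + X^8 : PowerSeries ℂ).order = (7 : ℕ) := by
  rw [PowerSeries.order_eq_nat]
  constructor
  · simp only [map_add, PowerSeries.coeff_C_mul, PowerSeries.coeff_X_pow]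
    norm_num
    intro habs
    exact hb (by linear_combination habs)
  · intro m hm
    simp only [map_add, PowerSeries.coeff_C_mul, PowerSeries.coeff_X_pow]
    have h6 : b^2 - 1 = 0 := by rw [hb2]; ring
    have h7 : m ≠ 7 := by omega
    have h8 : m ≠ 8 := by omega
    by_cases h6' : m = 6 <;> simp [h6, h6', h7, h8]

lemma order_xy1 (i j : ℕ) :
    ((X^2 : PowerSeries ℂ)^i * (X^3+X^4)^j).order = ((2*i+3*j : ℕ) : ℕ∞) := by
  have := order_m1 i j 1 one_ne_zero
  rwa [map_one, one_mul] at this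

lemma order_xy2 (b : ℂ) (hb : b ≠ 0) (i j : ℕ) :
    ((X^2 : PowerSeries ℂ)^i * (C b * X^3)^j).order = ((2*i+3*j : ℕ) : ℕ∞) := by
  have := order_m2 b hb i j 1 one_ne_zero
  rwa [map_one, one_mul] at this

lemma mem_gammaTwo {x₁ y₁ x₂ y₂ : PowerSeries ℂ} {d : ℕ × ℕ} (h : MvPowerSeries (Fin 2) ℂ)
    (h1 : (subst2 x₁ y₁ h).order = (d.1 : ℕ∞)) (h2 : (subst2 x₂ y₂ h).order = (d.2 : ℕ∞)) :
    d ∈ gammaTwo x₁ y₁ x₂ y₂ :=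
  ⟨h, ne_zero_of_order_nat h1, ne_zero_of_order_nat h2, h1, h2⟩


-- ======================= block 4: order arithmetic helpers =======================

lemma order_add_lt {u v : PowerSeries ℂ} {n m : ℕ} (hu : u.order = (n : ℕ∞))
    (hv : v.order = (m : ℕ∞)) (hnm : n < m) : (u + v).order = (n : ℕ∞) := by
  rw [PowerSeries.order_add_of_order_ne u v (by rw [hu, hv]; exact_mod_cast hnm.ne), hu, hv]
  exact min_eq_left (by exact_mod_cast hnm.le)

lemma order_mul_nat {u v : PowerSeries ℂ} {n m : ℕ} (hu : u.order = (n : ℕ∞))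
    (hv : v.order = (m : ℕ∞)) : (u * v).order = ((n + m : ℕ) : ℕ∞) := by
  rw [PowerSeries.order_mul, hu, hv]
  push_cast
  rfl

lemma order_cast_eq {u : PowerSeries ℂ} {n m : ℕ} (h : u.order = (n : ℕ∞)) (e : n = m) :
    u.order = (m : ℕ∞) := e ▸ h

-- ======================= block 5: Γ ⊇ witnesses =======================

lemma gamma_diag (b : ℂ) (hb : b ≠ 0) (a : ℕ) (ha : a ≠ 1) :
    ((a, a) : ℕ × ℕ) ∈ gammaTwo (X ^ 2) (X ^ 3 + X ^ 4) (X ^ 2) (C b * X ^ 3) := by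
  apply mem_gammaTwo (mono (mexp a).1 (mexp a).2 1)
  · rw [subst2_mono_b1]
    exact order_cast_eq (order_m1 _ _ 1 one_ne_zero) (mexp_spec ha)
  · rw [subst2_mono_b2]
    exact order_cast_eq (order_m2 b hb _ _ 1 one_ne_zero) (mexp_spec ha)

lemma gamma_left (b : ℂ) (hb : b ≠ 0) (hb2 : b^2 ≠ 1) (k : ℕ) (hk : 1 ≤ k) :
    ((6, 6 + k) : ℕ × ℕ) ∈ gammaTwo (X ^ 2) (X ^ 3 + X ^ 4) (X ^ 2) (C b * X ^ 3) := by
  apply mem_gammaTwo (F2m b 0 0 + mono (mexp (6+k)).1 (mexp (6+k)).2 1)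
  · rw [subst2_add, subst2_F2m_b1, subst2_mono_b1]
    have h1 : ((X^2 : PowerSeries ℂ)^0 * (X^3+X^4)^0 *
        (C (1-b^2) * X^6 + C 2 * X^7 + X^8)).order = ((6:ℕ) : ℕ∞) := by
      rw [pow_zero, pow_zero, one_mul, one_mul]
      exact order_u1 b hb2
    have h2 := order_cast_eq (order_m1 (mexp (6+k)).1 (mexp (6+k)).2 1 one_ne_zero)
      (mexp_spec (by omega : 6+k ≠ 1))
    exact order_add_lt h1 h2 (by omega)
  · rw [subst2_add, subst2_F2m_b2, zero_add, subst2_mono_b2]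
    exact order_cast_eq (order_m2 b hb _ _ 1 one_ne_zero) (mexp_spec (by omega))

lemma gamma_right (b : ℂ) (hb : b ≠ 0) (hb2 : b^2 ≠ 1) (k : ℕ) (hk : 1 ≤ k) :
    ((6 + k, 6) : ℕ × ℕ) ∈ gammaTwo (X ^ 2) (X ^ 3 + X ^ 4) (X ^ 2) (C b * X ^ 3) := by
  apply mem_gammaTwo (F1m 0 0 + mono (mexp (6+k)).1 (mexp (6+k)).2 1)
  · rw [subst2_add, subst2_F1m_b1, zero_add, subst2_mono_b1]
    exact order_cast_eq (order_m1 _ _ 1 one_ne_zero) (mexp_spec (by omega))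
  · rw [subst2_add, subst2_F1m_b2, subst2_mono_b2]
    have h1 : ((X^2 : PowerSeries ℂ)^0 * (C b * X^3)^0 *
        (C (b^2-1) * X^6 + C (-(2*b)) * X^7 + X^8)).order = ((6:ℕ) : ℕ∞) := by
      rw [pow_zero, pow_zero, one_mul, one_mul]
      exact order_u2 b hb2
    have h2 := order_cast_eq (order_m2 b hb (mexp (6+k)).1 (mexp (6+k)).2 1 one_ne_zero)
      (mexp_spec (by omega : 6+k ≠ 1))
    exact order_add_lt h1 h2 (by omega)

lemma gamma_both (b : ℂ) (hb : b ≠ 0) (hb2 : b^2 ≠ 1) (k l : ℕ) :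
    ((8 + k, 8 + l) : ℕ × ℕ) ∈ gammaTwo (X ^ 2) (X ^ 3 + X ^ 4) (X ^ 2) (C b * X ^ 3) := by
  apply mem_gammaTwo (F1m (mexp (2+l)).1 (mexp (2+l)).2 + F2m b (mexp (2+k)).1 (mexp (2+k)).2)
  · rw [subst2_add, subst2_F1m_b1, zero_add, subst2_F2m_b1]
    refine order_cast_eq (order_mul_nat (order_xy1 _ _) (order_u1 b hb2)) ?_
    rw [mexp_spec (by omega : 2+k ≠ 1)]; omega
  · rw [subst2_add, subst2_F2m_b2, add_zero, subst2_F1m_b2]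
    refine order_cast_eq (order_mul_nat (order_xy2 b hb _ _) (order_u2 b hb2)) ?_
    rw [mexp_spec (by omega : 2+l ≠ 1)]; omega

lemma gamma_left' (b : ℂ) (hb : b ≠ 0) (hb2 : b^2 = 1) (k : ℕ) (hk : 1 ≤ k) :
    ((7, 7 + k) : ℕ × ℕ) ∈ gammaTwo (X ^ 2) (X ^ 3 + X ^ 4) (X ^ 2) (C b * X ^ 3) := by
  apply mem_gammaTwo (F2m b 0 0 + mono (mexp (7+k)).1 (mexp (7+k)).2 1)
  · rw [subst2_add, subst2_F2m_b1, subst2_mono_b1]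
    have h1 : ((X^2 : PowerSeries ℂ)^0 * (X^3+X^4)^0 *
        (C (1-b^2) * X^6 + C 2 * X^7 + X^8)).order = ((7:ℕ) : ℕ∞) := by
      rw [pow_zero, pow_zero, one_mul, one_mul]
      exact order_u1' b hb2
    have h2 := order_cast_eq (order_m1 (mexp (7+k)).1 (mexp (7+k)).2 1 one_ne_zero)
      (mexp_spec (by omega : 7+k ≠ 1))
    exact order_add_lt h1 h2 (by omega)
  · rw [subst2_add, subst2_F2m_b2, zero_add, subst2_mono_b2]
    exact order_cast_eq (order_m2 b hb _ _ 1 one_ne_zero) (mexp_spec (by omega))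

lemma gamma_right' (b : ℂ) (hb : b ≠ 0) (hb2 : b^2 = 1) (k : ℕ) (hk : 1 ≤ k) :
    ((7 + k, 7) : ℕ × ℕ) ∈ gammaTwo (X ^ 2) (X ^ 3 + X ^ 4) (X ^ 2) (C b * X ^ 3) := by
  apply mem_gammaTwo (F1m 0 0 + mono (mexp (7+k)).1 (mexp (7+k)).2 1)
  · rw [subst2_add, subst2_F1m_b1, zero_add, subst2_mono_b1]
    exact order_cast_eq (order_m1 _ _ 1 one_ne_zero) (mexp_spec (by omega))
  · rw [subst2_add, subst2_F1m_b2, subst2_mono_b2]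
    have h1 : ((X^2 : PowerSeries ℂ)^0 * (C b * X^3)^0 *
        (C (b^2-1) * X^6 + C (-(2*b)) * X^7 + X^8)).order = ((7:ℕ) : ℕ∞) := by
      rw [pow_zero, pow_zero, one_mul, one_mul]
      exact order_u2' b hb hb2
    have h2 := order_cast_eq (order_m2 b hb (mexp (7+k)).1 (mexp (7+k)).2 1 one_ne_zero)
      (mexp_spec (by omega : 7+k ≠ 1))
    exact order_add_lt h1 h2 (by omega)

lemma gamma_both' (b : ℂ) (hb : b ≠ 0) (hb2 : b^2 = 1) (k l : ℕ) :
    ((9 + k, 9 + l) : ℕ × ℕ) ∈ gammaTwo (X ^ 2) (X ^ 3 + X ^ 4) (X ^ 2) (C b * X ^ 3) := by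
  apply mem_gammaTwo (F1m (mexp (2+l)).1 (mexp (2+l)).2 + F2m b (mexp (2+k)).1 (mexp (2+k)).2)
  · rw [subst2_add, subst2_F1m_b1, zero_add, subst2_F2m_b1]
    refine order_cast_eq (order_mul_nat (order_xy1 _ _) (order_u1' b hb2)) ?_
    rw [mexp_spec (by omega : 2+k ≠ 1)]; omega
  · rw [subst2_add, subst2_F2m_b2, add_zero, subst2_F1m_b2]
    refine order_cast_eq (order_mul_nat (order_xy2 b hb _ _) (order_u2' b hb hb2)) ?_
    rw [mexp_spec (by omega : 2+l ≠ 1)]; omega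


-- ======================= block 6: Γ ⊆ =======================

lemma gamma_sub_ne1 (b : ℂ) (hb : b ≠ 0) (hb2 : b ^ 2 ≠ 1) (p : ℕ × ℕ)
    (hp : p ∈ gammaTwo (X ^ 2) (X ^ 3 + X ^ 4) (X ^ 2) (C b * X ^ 3)) :
    p = (0, 0) ∨ (∃ a : ℕ, 2 ≤ a ∧ a ≤ 7 ∧ p = (a, a)) ∨
      (∃ k : ℕ, p = (6, 6 + k)) ∨ (∃ k : ℕ, p = (6 + k, 6)) ∨
      ∃ k l : ℕ, p = (8 + k, 8 + l) := by
  obtain ⟨d1, d2⟩ := p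
  obtain ⟨h, hne1, hne2, ho1, ho2⟩ := hp
  simp only at ho1 ho2
  by_cases h00 : cf h 0 0 = 0
  case neg =>
    left
    have e1 : d1 = 0 := eq_of_coeffs ho1 (by rw [coeff0_b1]; exact h00) (by omega)
    have e2 : d2 = 0 := eq_of_coeffs ho2 (by rw [coeff0_b2]; exact h00) (by omega)
    simp [e1, e2]
  by_cases h10 : cf h 1 0 = 0
  case neg =>
    right; left; refine ⟨2, by omega, by omega, ?_⟩
    have e1 : d1 = 2 := eq_of_coeffs ho1 (by rw [coeff2_b1]; exact h10)
      (by intro m hm; interval_cases m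
          · rw [coeff0_b1]; exact h00
          · rw [coeff1_b1])
    have e2 : d2 = 2 := eq_of_coeffs ho2 (by rw [coeff2_b2]; exact h10)
      (by intro m hm; interval_cases m
          · rw [coeff0_b2]; exact h00
          · rw [coeff1_b2])
    simp [e1, e2]
  by_cases h01 : cf h 0 1 = 0
  case neg =>
    right; left; refine ⟨3, by omega, by omega, ?_⟩
    have e1 : d1 = 3 := eq_of_coeffs ho1 (by rw [coeff3_b1]; exact h01)
      (by intro m hm; interval_cases m
          · rw [coeff0_b1]; exact h00
          · rw [coeff1_b1]
          · rw [coeff2_b1]; exact h10)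
    have e2 : d2 = 3 := eq_of_coeffs ho2 (by rw [coeff3_b2]; exact mul_ne_zero hb h01)
      (by intro m hm; interval_cases m
          · rw [coeff0_b2]; exact h00
          · rw [coeff1_b2]
          · rw [coeff2_b2]; exact h10)
    simp [e1, e2]
  by_cases h20 : cf h 2 0 = 0
  case neg =>
    right; left; refine ⟨4, by omega, by omega, ?_⟩
    have e1 : d1 = 4 := eq_of_coeffs ho1 (by rw [coeff4_b1, h01, add_zero]; exact h20)
      (by intro m hm; interval_cases m
          · rw [coeff0_b1]; exact h00
          · rw [coeff1_b1]
          · rw [coeff2_b1]; exact h10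
          · rw [coeff3_b1]; exact h01)
    have e2 : d2 = 4 := eq_of_coeffs ho2 (by rw [coeff4_b2]; exact h20)
      (by intro m hm; interval_cases m
          · rw [coeff0_b2]; exact h00
          · rw [coeff1_b2]
          · rw [coeff2_b2]; exact h10
          · rw [coeff3_b2, h01, mul_zero])
    simp [e1, e2]
  by_cases h11 : cf h 1 1 = 0
  case neg =>
    right; left; refine ⟨5, by omega, by omega, ?_⟩
    have e1 : d1 = 5 := eq_of_coeffs ho1 (by rw [coeff5_b1]; exact h11)
      (by intro m hm; interval_cases m
          · rw [coeff0_b1]; exact h00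
          · rw [coeff1_b1]
          · rw [coeff2_b1]; exact h10
          · rw [coeff3_b1]; exact h01
          · rw [coeff4_b1, h01, h20, add_zero])
    have e2 : d2 = 5 := eq_of_coeffs ho2 (by rw [coeff5_b2]; exact mul_ne_zero hb h11)
      (by intro m hm; interval_cases m
          · rw [coeff0_b2]; exact h00
          · rw [coeff1_b2]
          · rw [coeff2_b2]; exact h10
          · rw [coeff3_b2, h01, mul_zero]
          · rw [coeff4_b2]; exact h20)
    simp [e1, e2]
  -- now all coefficients below 6 vanish on both branches
  have low1 : ∀ m < 6, PowerSeries.coeff m (subst2 (X^2) (X^3+X^4) h) = 0 := by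
    intro m hm; interval_cases m
    · rw [coeff0_b1]; exact h00
    · rw [coeff1_b1]
    · rw [coeff2_b1]; exact h10
    · rw [coeff3_b1]; exact h01
    · rw [coeff4_b1, h01, h20, add_zero]
    · rw [coeff5_b1]; exact h11
  have low2 : ∀ m < 6, PowerSeries.coeff m (subst2 (X^2) (C b * X^3) h) = 0 := by
    intro m hm; interval_cases m
    · rw [coeff0_b2]; exact h00
    · rw [coeff1_b2]
    · rw [coeff2_b2]; exact h10
    · rw [coeff3_b2, h01, mul_zero]
    · rw [coeff4_b2]; exact h20
    · rw [coeff5_b2, h11, mul_zero]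
  have hc61 : PowerSeries.coeff 6 (subst2 (X^2) (X^3+X^4) h) = cf h 3 0 + cf h 0 2 := by
    rw [coeff6_b1, h11]; ring
  have hc62 : PowerSeries.coeff 6 (subst2 (X^2) (C b * X^3) h)
      = cf h 3 0 + b^2 * cf h 0 2 := coeff6_b2 b h
  by_cases hA6 : cf h 3 0 + cf h 0 2 = 0
  case neg =>
    by_cases hB6 : cf h 3 0 + b^2 * cf h 0 2 = 0
    case neg =>
      right; left; refine ⟨6, by omega, by omega, ?_⟩
      have e1 : d1 = 6 := eq_of_coeffs ho1 (by rw [hc61]; exact hA6) low1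
      have e2 : d2 = 6 := eq_of_coeffs ho2 (by rw [hc62]; exact hB6) low2
      simp [e1, e2]
    case pos =>
      right; right; left
      have e1 : d1 = 6 := eq_of_coeffs ho1 (by rw [hc61]; exact hA6) low1
      have e2 : 6 < d2 := ge_of_coeffs ho2
        (by intro m hm
            rcases Nat.lt_succ_iff_lt_or_eq.mp (Nat.lt_succ_of_le hm) with hm' | hm'
            · exact low2 m hm'
            · rw [hm', hc62]; exact hB6)
      exact ⟨d2 - 6, by simp [e1]; omega⟩
  by_cases hB6 : cf h 3 0 + b^2 * cf h 0 2 = 0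
  case neg =>
    right; right; right; left
    have e2 : d2 = 6 := eq_of_coeffs ho2 (by rw [hc62]; exact hB6) low2
    have e1 : 6 < d1 := ge_of_coeffs ho1
      (by intro m hm
          rcases Nat.lt_succ_iff_lt_or_eq.mp (Nat.lt_succ_of_le hm) with hm' | hm'
          · exact low1 m hm'
          · rw [hm', hc61]; exact hA6)
    exact ⟨d1 - 6, by simp [e2]; omega⟩
  -- both 6-coefficients vanish; since b² ≠ 1 this forces c02 = c30 = 0
  have h02 : cf h 0 2 = 0 := by
    have : (b^2 - 1) * cf h 0 2 = 0 := by linear_combination hB6 - hA6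
    rcases mul_eq_zero.mp this with h' | h'
    · exact absurd (by linear_combination h' : b^2 = 1) hb2
    · exact h'
  have h30 : cf h 3 0 = 0 := by linear_combination hA6 - h02
  have hc71 : PowerSeries.coeff 7 (subst2 (X^2) (X^3+X^4) h) = cf h 2 1 := by
    rw [coeff7_b1, h02]; ring
  have hc72 : PowerSeries.coeff 7 (subst2 (X^2) (C b * X^3) h) = b * cf h 2 1 :=
    coeff7_b2 b h
  have low1' : ∀ m ≤ 6, PowerSeries.coeff m (subst2 (X^2) (X^3+X^4) h) = 0 := by
    intro m hm
    rcases Nat.lt_or_ge m 6 with hm' | hm'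
    · exact low1 m hm'
    · have : m = 6 := by omega
      rw [this, hc61, h02, h30, add_zero]
  have low2' : ∀ m ≤ 6, PowerSeries.coeff m (subst2 (X^2) (C b * X^3) h) = 0 := by
    intro m hm
    rcases Nat.lt_or_ge m 6 with hm' | hm'
    · exact low2 m hm'
    · have : m = 6 := by omega
      rw [this, hc62, h02, h30, mul_zero, add_zero]
  by_cases h21 : cf h 2 1 = 0
  case neg =>
    right; left; refine ⟨7, by omega, by omega, ?_⟩
    have e1 : d1 = 7 := eq_of_coeffs ho1 (by rw [hc71]; exact h21)
      (fun m hm => low1' m (by omega))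
    have e2 : d2 = 7 := eq_of_coeffs ho2 (by rw [hc72]; exact mul_ne_zero hb h21)
      (fun m hm => low2' m (by omega))
    simp [e1, e2]
  -- all coefficients up to 7 vanish on both branches
  right; right; right; right
  have e1 : 7 < d1 := ge_of_coeffs ho1
    (by intro m hm
        rcases Nat.lt_or_ge m 7 with hm' | hm'
        · exact low1' m (by omega)
        · have : m = 7 := by omega
          rw [this, hc71, h21])
  have e2 : 7 < d2 := ge_of_coeffs ho2
    (by intro m hm
        rcases Nat.lt_or_ge m 7 with hm' | hm'
        · exact low2' m (by omega)
        · have : m = 7 := by omega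
          rw [this, hc72, h21, mul_zero])
  exact ⟨d1 - 8, d2 - 8, by simp; omega⟩


lemma gamma_sub_eq1 (b : ℂ) (hb : b ≠ 0) (hb2 : b ^ 2 = 1) (p : ℕ × ℕ)
    (hp : p ∈ gammaTwo (X ^ 2) (X ^ 3 + X ^ 4) (X ^ 2) (C b * X ^ 3)) :
    p = (0, 0) ∨ (∃ a : ℕ, 2 ≤ a ∧ a ≤ 8 ∧ p = (a, a)) ∨
      (∃ k : ℕ, p = (7, 7 + k)) ∨ (∃ k : ℕ, p = (7 + k, 7)) ∨
      ∃ k l : ℕ, p = (9 + k, 9 + l) := by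
  obtain ⟨d1, d2⟩ := p
  obtain ⟨h, hne1, hne2, ho1, ho2⟩ := hp
  simp only at ho1 ho2
  by_cases h00 : cf h 0 0 = 0
  case neg =>
    left
    have e1 : d1 = 0 := eq_of_coeffs ho1 (by rw [coeff0_b1]; exact h00) (by omega)
    have e2 : d2 = 0 := eq_of_coeffs ho2 (by rw [coeff0_b2]; exact h00) (by omega)
    simp [e1, e2]
  by_cases h10 : cf h 1 0 = 0
  case neg =>
    right; left; refine ⟨2, by omega, by omega, ?_⟩
    have e1 : d1 = 2 := eq_of_coeffs ho1 (by rw [coeff2_b1]; exact h10)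
      (by intro m hm; interval_cases m
          · rw [coeff0_b1]; exact h00
          · rw [coeff1_b1])
    have e2 : d2 = 2 := eq_of_coeffs ho2 (by rw [coeff2_b2]; exact h10)
      (by intro m hm; interval_cases m
          · rw [coeff0_b2]; exact h00
          · rw [coeff1_b2])
    simp [e1, e2]
  by_cases h01 : cf h 0 1 = 0
  case neg =>
    right; left; refine ⟨3, by omega, by omega, ?_⟩
    have e1 : d1 = 3 := eq_of_coeffs ho1 (by rw [coeff3_b1]; exact h01)
      (by intro m hm; interval_cases m
          · rw [coeff0_b1]; exact h00
          · rw [coeff1_b1]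
          · rw [coeff2_b1]; exact h10)
    have e2 : d2 = 3 := eq_of_coeffs ho2 (by rw [coeff3_b2]; exact mul_ne_zero hb h01)
      (by intro m hm; interval_cases m
          · rw [coeff0_b2]; exact h00
          · rw [coeff1_b2]
          · rw [coeff2_b2]; exact h10)
    simp [e1, e2]
  by_cases h20 : cf h 2 0 = 0
  case neg =>
    right; left; refine ⟨4, by omega, by omega, ?_⟩
    have e1 : d1 = 4 := eq_of_coeffs ho1 (by rw [coeff4_b1, h01, add_zero]; exact h20)
      (by intro m hm; interval_cases m
          · rw [coeff0_b1]; exact h00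
          · rw [coeff1_b1]
          · rw [coeff2_b1]; exact h10
          · rw [coeff3_b1]; exact h01)
    have e2 : d2 = 4 := eq_of_coeffs ho2 (by rw [coeff4_b2]; exact h20)
      (by intro m hm; interval_cases m
          · rw [coeff0_b2]; exact h00
          · rw [coeff1_b2]
          · rw [coeff2_b2]; exact h10
          · rw [coeff3_b2, h01, mul_zero])
    simp [e1, e2]
  by_cases h11 : cf h 1 1 = 0
  case neg =>
    right; left; refine ⟨5, by omega, by omega, ?_⟩
    have e1 : d1 = 5 := eq_of_coeffs ho1 (by rw [coeff5_b1]; exact h11)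
      (by intro m hm; interval_cases m
          · rw [coeff0_b1]; exact h00
          · rw [coeff1_b1]
          · rw [coeff2_b1]; exact h10
          · rw [coeff3_b1]; exact h01
          · rw [coeff4_b1, h01, h20, add_zero])
    have e2 : d2 = 5 := eq_of_coeffs ho2 (by rw [coeff5_b2]; exact mul_ne_zero hb h11)
      (by intro m hm; interval_cases m
          · rw [coeff0_b2]; exact h00
          · rw [coeff1_b2]
          · rw [coeff2_b2]; exact h10
          · rw [coeff3_b2, h01, mul_zero]
          · rw [coeff4_b2]; exact h20)
    simp [e1, e2]
  have low1 : ∀ m < 6, PowerSeries.coeff m (subst2 (X^2) (X^3+X^4) h) = 0 := by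
    intro m hm; interval_cases m
    · rw [coeff0_b1]; exact h00
    · rw [coeff1_b1]
    · rw [coeff2_b1]; exact h10
    · rw [coeff3_b1]; exact h01
    · rw [coeff4_b1, h01, h20, add_zero]
    · rw [coeff5_b1]; exact h11
  have low2 : ∀ m < 6, PowerSeries.coeff m (subst2 (X^2) (C b * X^3) h) = 0 := by
    intro m hm; interval_cases m
    · rw [coeff0_b2]; exact h00
    · rw [coeff1_b2]
    · rw [coeff2_b2]; exact h10
    · rw [coeff3_b2, h01, mul_zero]
    · rw [coeff4_b2]; exact h20
    · rw [coeff5_b2, h11, mul_zero]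
  have hc61 : PowerSeries.coeff 6 (subst2 (X^2) (X^3+X^4) h) = cf h 3 0 + cf h 0 2 := by
    rw [coeff6_b1, h11]; ring
  have hc62 : PowerSeries.coeff 6 (subst2 (X^2) (C b * X^3) h)
      = cf h 3 0 + cf h 0 2 := by
    rw [coeff6_b2, hb2, one_mul]
  by_cases hA6 : cf h 3 0 + cf h 0 2 = 0
  case neg =>
    right; left; refine ⟨6, by omega, by omega, ?_⟩
    have e1 : d1 = 6 := eq_of_coeffs ho1 (by rw [hc61]; exact hA6) low1
    have e2 : d2 = 6 := eq_of_coeffs ho2 (by rw [hc62]; exact hA6) low2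
    simp [e1, e2]
  have low1' : ∀ m ≤ 6, PowerSeries.coeff m (subst2 (X^2) (X^3+X^4) h) = 0 := by
    intro m hm
    rcases Nat.lt_or_ge m 6 with hm' | hm'
    · exact low1 m hm'
    · have : m = 6 := by omega
      rw [this, hc61, hA6]
  have low2' : ∀ m ≤ 6, PowerSeries.coeff m (subst2 (X^2) (C b * X^3) h) = 0 := by
    intro m hm
    rcases Nat.lt_or_ge m 6 with hm' | hm'
    · exact low2 m hm'
    · have : m = 6 := by omega
      rw [this, hc62, hA6]
  have hc71 : PowerSeries.coeff 7 (subst2 (X^2) (X^3+X^4) h)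
      = cf h 2 1 + 2 * cf h 0 2 := coeff7_b1 h
  have hc72 : PowerSeries.coeff 7 (subst2 (X^2) (C b * X^3) h) = b * cf h 2 1 :=
    coeff7_b2 b h
  by_cases hA7 : cf h 2 1 + 2 * cf h 0 2 = 0
  case neg =>
    by_cases hB7 : cf h 2 1 = 0
    case neg =>
      right; left; refine ⟨7, by omega, by omega, ?_⟩
      have e1 : d1 = 7 := eq_of_coeffs ho1 (by rw [hc71]; exact hA7)
        (fun m hm => low1' m (by omega))
      have e2 : d2 = 7 := eq_of_coeffs ho2 (by rw [hc72]; exact mul_ne_zero hb hB7)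
        (fun m hm => low2' m (by omega))
      simp [e1, e2]
    case pos =>
      right; right; left
      have e1 : d1 = 7 := eq_of_coeffs ho1 (by rw [hc71]; exact hA7)
        (fun m hm => low1' m (by omega))
      have e2 : 7 < d2 := ge_of_coeffs ho2
        (by intro m hm
            rcases Nat.lt_or_ge m 7 with hm' | hm'
            · exact low2' m (by omega)
            · have : m = 7 := by omega
              rw [this, hc72, hB7, mul_zero])
      exact ⟨d2 - 7, by simp [e1]; omega⟩
  by_cases hB7 : cf h 2 1 = 0
  case neg =>
    right; right; right; left
    have e2 : d2 = 7 := eq_of_coeffs ho2 (by rw [hc72]; exact mul_ne_zero hb hB7)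
      (fun m hm => low2' m (by omega))
    have e1 : 7 < d1 := ge_of_coeffs ho1
      (by intro m hm
          rcases Nat.lt_or_ge m 7 with hm' | hm'
          · exact low1' m (by omega)
          · have : m = 7 := by omega
            rw [this, hc71, hA7])
    exact ⟨d1 - 7, by simp [e2]; omega⟩
  -- both 7-coefficients vanish : c21 = 0 and hence c02 = 0, c30 = 0
  have h02 : cf h 0 2 = 0 := by
    have := hA7
    rw [hB7, zero_add] at this
    have h2 : (2:ℂ) ≠ 0 := two_ne_zero
    exact (mul_eq_zero.mp this).resolve_left h2
  have h30 : cf h 3 0 = 0 := by linear_combination hA6 - h02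
  have low1'' : ∀ m ≤ 7, PowerSeries.coeff m (subst2 (X^2) (X^3+X^4) h) = 0 := by
    intro m hm
    rcases Nat.lt_or_ge m 7 with hm' | hm'
    · exact low1' m (by omega)
    · have : m = 7 := by omega
      rw [this, hc71, hB7, h02]; ring
  have low2'' : ∀ m ≤ 7, PowerSeries.coeff m (subst2 (X^2) (C b * X^3) h) = 0 := by
    intro m hm
    rcases Nat.lt_or_ge m 7 with hm' | hm'
    · exact low2' m (by omega)
    · have : m = 7 := by omega
      rw [this, hc72, hB7, mul_zero]
  have hc81 : PowerSeries.coeff 8 (subst2 (X^2) (X^3+X^4) h)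
      = cf h 4 0 + cf h 1 2 := by
    rw [coeff8_b1, hB7, h02]; ring
  have hc82 : PowerSeries.coeff 8 (subst2 (X^2) (C b * X^3) h)
      = cf h 4 0 + cf h 1 2 := by
    rw [coeff8_b2, hb2, one_mul]
  by_cases h8 : cf h 4 0 + cf h 1 2 = 0
  case neg =>
    right; left; refine ⟨8, by omega, by omega, ?_⟩
    have e1 : d1 = 8 := eq_of_coeffs ho1 (by rw [hc81]; exact h8)
      (fun m hm => low1'' m (by omega))
    have e2 : d2 = 8 := eq_of_coeffs ho2 (by rw [hc82]; exact h8)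
      (fun m hm => low2'' m (by omega))
    simp [e1, e2]
  right; right; right; right
  have e1 : 8 < d1 := ge_of_coeffs ho1
    (by intro m hm
        rcases Nat.lt_or_ge m 8 with hm' | hm'
        · exact low1'' m (by omega)
        · have : m = 8 := by omega
          rw [this, hc81, h8])
  have e2 : 8 < d2 := ge_of_coeffs ho2
    (by intro m hm
        rcases Nat.lt_or_ge m 8 with hm' | hm'
        · exact low2'' m (by omega)
        · have : m = 8 := by omega
          rw [this, hc82, h8])
  exact ⟨d1 - 9, d2 - 9, by simp; omega⟩


-- ======================= block 7: Λ infrastructure =======================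

lemma dt_x1 : dt (X^2 : PowerSeries ℂ) = C 2 * X^1 := by
  ext k
  simp only [dt, PowerSeries.coeff_mk, PowerSeries.coeff_C_mul, PowerSeries.coeff_X,
    PowerSeries.coeff_X_pow]
  by_cases h : k = 1
  · subst h; norm_num
  · have : k + 1 ≠ 2 := by omega
    simp [h, this]

lemma dt_y1 : dt (X^3 + X^4 : PowerSeries ℂ) = C 3 * X^2 + C 4 * X^3 := by
  ext k
  simp only [dt, PowerSeries.coeff_mk, map_add, PowerSeries.coeff_C_mul,
    PowerSeries.coeff_X_pow]
  by_cases h2 : k = 2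
  · subst h2; norm_num
  · by_cases h3 : k = 3
    · subst h3; norm_num
    · have e1 : k + 1 ≠ 3 := by omega
      have e2 : k + 1 ≠ 4 := by omega
      simp [h2, h3, e1, e2]

lemma dt_y2 (b : ℂ) : dt (C b * X^3 : PowerSeries ℂ) = C (3*b) * X^2 := by
  ext k
  simp only [dt, PowerSeries.coeff_mk, PowerSeries.coeff_C_mul, PowerSeries.coeff_X_pow]
  by_cases h : k = 2
  · subst h; norm_num
  · have : k + 1 ≠ 3 := by omega
    simp [h, this]

lemma subst2_zero (a b : PowerSeries ℂ) : subst2 a b 0 = 0 := by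
  ext k
  simp [coeff_subst2]

lemma coeff_mul_CX (f : PowerSeries ℂ) (c : ℂ) (n k : ℕ) :
    PowerSeries.coeff k (f * (C c * X^n)) =
      if n ≤ k then c * PowerSeries.coeff (k-n) f else 0 := by
  rw [show f * (C c * X^n) = C c * (f * X^n) by ring, PowerSeries.coeff_C_mul,
    PowerSeries.coeff_mul_X_pow']
  split_ifs <;> simp

lemma eq_of_coeffs_X {w : PowerSeries ℂ} {d N : ℕ} (hord : (X*w).order = (d : ℕ∞))
    (hN : PowerSeries.coeff N w ≠ 0) (hc : ∀ m < N, PowerSeries.coeff m w = 0) :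
    d = N + 1 := by
  have h1 : w.order = (N : ℕ∞) := PowerSeries.order_eq_nat.mpr ⟨hN, hc⟩
  rw [PowerSeries.order_mul, PowerSeries.order_X, h1] at hord
  have : ((d:ℕ∞)) = ((N+1 : ℕ) : ℕ∞) := by rw [← hord]; push_cast; ring
  exact_mod_cast this

lemma ge_of_coeffs_X {w : PowerSeries ℂ} {d N : ℕ} (hord : (X*w).order = (d : ℕ∞))
    (hc : ∀ m ≤ N, PowerSeries.coeff m w = 0) : N + 1 < d := by
  by_contra hlt
  push_neg at hlt
  have hd : PowerSeries.coeff d (X*w) ≠ 0 := (PowerSeries.order_eq_nat.mp hord).1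
  rcases Nat.eq_zero_or_pos d with rfl | hdpos
  · exact hd (by simp)
  · obtain ⟨d', rfl⟩ : ∃ d', d = d' + 1 := ⟨d - 1, by omega⟩
    rw [PowerSeries.coeff_succ_X_mul] at hd
    exact hd (hc d' (by omega))

lemma order_X_mul_of_order {w : PowerSeries ℂ} {n : ℕ} (h : w.order = (n : ℕ∞)) :
    (X*w).order = ((n+1 : ℕ) : ℕ∞) := by
  rw [PowerSeries.order_mul, PowerSeries.order_X, h]
  push_cast
  ring

lemma mem_lambdaTwo {x₁ y₁ x₂ y₂ : PowerSeries ℂ} {n m : ℕ} (A B : MvPowerSeries (Fin 2) ℂ)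
    (h1 : (subst2 x₁ y₁ A * dt x₁ + subst2 x₁ y₁ B * dt y₁).order = (n : ℕ∞))
    (h2 : (subst2 x₂ y₂ A * dt x₂ + subst2 x₂ y₂ B * dt y₂).order = (m : ℕ∞)) :
    ((n+1, m+1) : ℕ × ℕ) ∈ lambdaTwo x₁ y₁ x₂ y₂ :=
  ⟨A, B, ne_zero_of_order_nat h1, ne_zero_of_order_nat h2,
    order_X_mul_of_order h1, order_X_mul_of_order h2⟩

lemma order_CXn (c : ℂ) (hc : c ≠ 0) (n : ℕ) : (C c * X^n : PowerSeries ℂ).order = (n : ℕ∞) := by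
  rw [PowerSeries.order_mul, order_C' c hc, PowerSeries.order_X_pow, zero_add]


-- ======================= block 8: Λ generators =======================

noncomputable def LA1 (b : ℂ) (k : ℕ) : MvPowerSeries (Fin 2) ℂ :=
  if k = 1 then mono 0 1 (9*(1-b^2)) + mono 2 0 (-(3*b^2))
  else mono (mexp k).1 ((mexp k).2+1) 3

noncomputable def LB1 (b : ℂ) (k : ℕ) : MvPowerSeries (Fin 2) ℂ :=
  if k = 1 then mono 1 0 (-(6*(1-b^2))) + mono 0 1 2
  else mono ((mexp k).1+1) (mexp k).2 (-2)

noncomputable def LA2 (b : ℂ) (l : ℕ) : MvPowerSeries (Fin 2) ℂ :=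
  if l = 1 then mono 0 1 (9*(1-b^2)) + mono 2 0 (3*(1-b^2)-3) + mono 1 1 (-4) + mono 3 0 4
  else mono (mexp l).1 ((mexp l).2+1) 3 + mono ((mexp l).1+2) (mexp l).2 1

noncomputable def LB2 (b : ℂ) (l : ℕ) : MvPowerSeries (Fin 2) ℂ :=
  if l = 1 then mono 1 0 (-(6*(1-b^2))) + mono 0 1 2 + mono 2 0 (-2)
  else mono ((mexp l).1+1) (mexp l).2 (-2)

lemma w2_gen1 (b : ℂ) (k : ℕ) :
    subst2 (X^2) (C b * X^3) (LA1 b k) * dt (X^2) +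
      subst2 (X^2) (C b * X^3) (LB1 b k) * dt (C b * X^3) = 0 := by
  rw [LA1, LB1, dt_x1, dt_y2]
  split_ifs with hk
  · rw [subst2_add, subst2_add, subst2_mono_b2, subst2_mono_b2, subst2_mono_b2,
      subst2_mono_b2]
    simp only [map_neg, map_mul, map_sub, map_one, map_ofNat, map_pow, pow_succ, pow_zero]
    ring
  · rw [subst2_mono_b2, subst2_mono_b2]
    simp only [map_neg, map_mul, map_ofNat, pow_succ, pow_zero]
    ring

lemma w1_gen1 (b : ℂ) (k : ℕ) :
    (subst2 (X^2) (X^3+X^4) (LA1 b k) * dt (X^2) +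
      subst2 (X^2) (X^3+X^4) (LB1 b k) * dt (X^3+X^4)).order = ((5+k : ℕ) : ℕ∞) := by
  rw [LA1, LB1, dt_x1, dt_y1]
  split_ifs with hk
  · subst hk
    have e : subst2 (X^2) (X^3+X^4) (mono 0 1 (9*(1-b^2)) + mono 2 0 (-(3*b^2))) * (C 2 * X^1) +
        subst2 (X^2) (X^3+X^4) (mono 1 0 (-(6*(1-b^2))) + mono 0 1 2) * (C 3 * X^2 + C 4 * X^3)
        = C 14 * X^6 + C 8 * X^7 := by
      rw [subst2_add, subst2_add, subst2_mono_b1, subst2_mono_b1, subst2_mono_b1,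
        subst2_mono_b1]
      simp only [map_neg, map_mul, map_sub, map_one, map_ofNat, map_pow, pow_succ, pow_zero]
      ring
    rw [e]
    exact order_add_lt (order_CXn 14 (by norm_num) 6) (order_CXn 8 (by norm_num) 7) (by omega)
  · have e : subst2 (X^2) (X^3+X^4) (mono (mexp k).1 ((mexp k).2+1) 3) * (C 2 * X^1) +
        subst2 (X^2) (X^3+X^4) (mono ((mexp k).1+1) (mexp k).2 (-2)) * (C 3 * X^2 + C 4 * X^3)
        = C (-2) * ((X^2)^(mexp k).1 * (X^3+X^4)^(mexp k).2) * X^5 := by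
      rw [subst2_mono_b1, subst2_mono_b1]
      simp only [map_neg, map_ofNat, pow_succ, pow_zero]
      ring
    rw [e, PowerSeries.order_mul, PowerSeries.order_mul, order_C' (-2) (by norm_num),
      order_xy1, PowerSeries.order_X_pow, zero_add]
    rw [← Nat.cast_add]
    norm_cast
    rw [mexp_spec hk]
    omega

lemma w1_gen2 (b : ℂ) (l : ℕ) :
    subst2 (X^2) (X^3+X^4) (LA2 b l) * dt (X^2) +
      subst2 (X^2) (X^3+X^4) (LB2 b l) * dt (X^3+X^4) = 0 := by
  rw [LA2, LB2, dt_x1, dt_y1]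
  split_ifs with hl
  · rw [subst2_add, subst2_add, subst2_add, subst2_add, subst2_add, subst2_mono_b1,
      subst2_mono_b1, subst2_mono_b1, subst2_mono_b1, subst2_mono_b1, subst2_mono_b1,
      subst2_mono_b1]
    simp only [map_neg, map_mul, map_sub, map_one, map_ofNat, map_pow, pow_succ, pow_zero]
    ring
  · rw [subst2_add, subst2_mono_b1, subst2_mono_b1, subst2_mono_b1]
    simp only [map_neg, map_one, map_ofNat, pow_succ, pow_zero]
    ring

lemma w2_gen2 (b : ℂ) (hb : b ≠ 0) (l : ℕ) :
    (subst2 (X^2) (C b * X^3) (LA2 b l) * dt (X^2) +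
      subst2 (X^2) (C b * X^3) (LB2 b l) * dt (C b * X^3)).order = ((5+l : ℕ) : ℕ∞) := by
  rw [LA2, LB2, dt_x1, dt_y2]
  split_ifs with hl
  · subst hl
    have e : subst2 (X^2) (C b * X^3)
          (mono 0 1 (9*(1-b^2)) + mono 2 0 (3*(1-b^2)-3) + mono 1 1 (-4) + mono 3 0 4) * (C 2 * X^1) +
        subst2 (X^2) (C b * X^3) (mono 1 0 (-(6*(1-b^2))) + mono 0 1 2 + mono 2 0 (-2)) *
          (C (3*b) * X^2)
        = C (-(14*b)) * X^6 + C 8 * X^7 := by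
      rw [subst2_add, subst2_add, subst2_add, subst2_add, subst2_add, subst2_mono_b2,
        subst2_mono_b2, subst2_mono_b2, subst2_mono_b2, subst2_mono_b2, subst2_mono_b2,
        subst2_mono_b2]
      simp only [map_neg, map_mul, map_sub, map_one, map_ofNat, map_pow, pow_succ, pow_zero]
      ring
    rw [e]
    exact order_add_lt (order_CXn _ (by simpa using hb) 6) (order_CXn 8 (by norm_num) 7)
      (by omega)
  · have e : subst2 (X^2) (C b * X^3)
          (mono (mexp l).1 ((mexp l).2+1) 3 + mono ((mexp l).1+2) (mexp l).2 1) * (C 2 * X^1) +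
        subst2 (X^2) (C b * X^3) (mono ((mexp l).1+1) (mexp l).2 (-2)) * (C (3*b) * X^2)
        = C 2 * ((X^2)^(mexp l).1 * (C b * X^3)^(mexp l).2) * X^5 := by
      rw [subst2_add, subst2_mono_b2, subst2_mono_b2, subst2_mono_b2]
      simp only [map_neg, map_one, map_mul, map_ofNat, pow_succ, pow_zero]
      ring
    rw [e, PowerSeries.order_mul, PowerSeries.order_mul, order_C' 2 (by norm_num),
      order_xy2 b hb, PowerSeries.order_X_pow, zero_add]
    rw [← Nat.cast_add]
    norm_cast
    rw [mexp_spec hl]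
    omega


-- ======================= block 9: Λ witnesses =======================

lemma lambda_small (b : ℂ) (hb : b ≠ 0) (a : ℕ) (ha : 1 ≤ a) (ha' : a ≤ 4) :
    ((a+1, a+1) : ℕ × ℕ) ∈ lambdaTwo (X ^ 2) (X ^ 3 + X ^ 4) (X ^ 2) (C b * X ^ 3) := by
  interval_cases a
  · -- value (2,2) : ω = dx
    apply mem_lambdaTwo (mono 0 0 1) 0
    · have e : subst2 (X^2) (X^3+X^4) (mono 0 0 1) * dt (X^2) +
          subst2 (X^2) (X^3+X^4) 0 * dt (X^3+X^4) = C 2 * X^1 := by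
        rw [subst2_mono_b1, subst2_zero, dt_x1]
        simp only [map_one, pow_zero]
        ring
      rw [e]; exact order_CXn 2 (by norm_num) 1
    · have e : subst2 (X^2) (C b * X^3) (mono 0 0 1) * dt (X^2) +
          subst2 (X^2) (C b * X^3) 0 * dt (C b * X^3) = C 2 * X^1 := by
        rw [subst2_mono_b2, subst2_zero, dt_x1]
        simp only [map_one, pow_zero]
        ring
      rw [e]; exact order_CXn 2 (by norm_num) 1
  · -- value (3,3) : ω = dy
    apply mem_lambdaTwo 0 (mono 0 0 1)
    · have e : subst2 (X^2) (X^3+X^4) 0 * dt (X^2) +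
          subst2 (X^2) (X^3+X^4) (mono 0 0 1) * dt (X^3+X^4) = C 3 * X^2 + C 4 * X^3 := by
        rw [subst2_mono_b1, subst2_zero, dt_y1]
        simp only [map_one, pow_zero]
        ring
      rw [e]
      exact order_add_lt (order_CXn 3 (by norm_num) 2) (order_CXn 4 (by norm_num) 3) (by omega)
    · have e : subst2 (X^2) (C b * X^3) 0 * dt (X^2) +
          subst2 (X^2) (C b * X^3) (mono 0 0 1) * dt (C b * X^3) = C (3*b) * X^2 := by
        rw [subst2_mono_b2, subst2_zero, dt_y2]
        simp only [map_one, pow_zero]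
        ring
      rw [e]
      exact order_CXn _ (by simpa using hb) 2
  · -- value (4,4) : ω = x dx
    apply mem_lambdaTwo (mono 1 0 1) 0
    · have e : subst2 (X^2) (X^3+X^4) (mono 1 0 1) * dt (X^2) +
          subst2 (X^2) (X^3+X^4) 0 * dt (X^3+X^4) = C 2 * X^3 := by
        rw [subst2_mono_b1, subst2_zero, dt_x1]
        simp only [map_one, pow_zero, pow_one]
        ring
      rw [e]; exact order_CXn 2 (by norm_num) 3
    · have e : subst2 (X^2) (C b * X^3) (mono 1 0 1) * dt (X^2) +
          subst2 (X^2) (C b * X^3) 0 * dt (C b * X^3) = C 2 * X^3 := by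
        rw [subst2_mono_b2, subst2_zero, dt_x1]
        simp only [map_one, pow_zero, pow_one]
        ring
      rw [e]; exact order_CXn 2 (by norm_num) 3
  · -- value (5,5) : ω = x dy
    apply mem_lambdaTwo 0 (mono 1 0 1)
    · have e : subst2 (X^2) (X^3+X^4) 0 * dt (X^2) +
          subst2 (X^2) (X^3+X^4) (mono 1 0 1) * dt (X^3+X^4) = C 3 * X^4 + C 4 * X^5 := by
        rw [subst2_mono_b1, subst2_zero, dt_y1]
        simp only [map_one, pow_zero, pow_one]
        ring
      rw [e]
      exact order_add_lt (order_CXn 3 (by norm_num) 4) (order_CXn 4 (by norm_num) 5) (by omega)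
    · have e : subst2 (X^2) (C b * X^3) 0 * dt (X^2) +
          subst2 (X^2) (C b * X^3) (mono 1 0 1) * dt (C b * X^3) = C (3*b) * X^4 := by
        rw [subst2_mono_b2, subst2_zero, dt_y2]
        simp only [map_one, pow_zero, pow_one]
        ring
      rw [e]
      exact order_CXn _ (by simpa using hb) 4

lemma lambda_big (b : ℂ) (hb : b ≠ 0) (k l : ℕ) :
    ((6+k, 6+l) : ℕ × ℕ) ∈ lambdaTwo (X ^ 2) (X ^ 3 + X ^ 4) (X ^ 2) (C b * X ^ 3) := by
  have hmem := mem_lambdaTwo (x₁ := X^2) (y₁ := X^3+X^4) (x₂ := X^2) (y₂ := C b * X^3)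
    (LA1 b k + LA2 b l) (LB1 b k + LB2 b l) (n := 5+k) (m := 5+l) ?_ ?_
  · have : ((5+k+1, 5+l+1) : ℕ × ℕ) = ((6+k, 6+l) : ℕ × ℕ) := by
      simp [Prod.ext_iff]; omega
    rwa [this] at hmem
  · have e : subst2 (X^2) (X^3+X^4) (LA1 b k + LA2 b l) * dt (X^2) +
        subst2 (X^2) (X^3+X^4) (LB1 b k + LB2 b l) * dt (X^3+X^4) =
        (subst2 (X^2) (X^3+X^4) (LA1 b k) * dt (X^2) +
          subst2 (X^2) (X^3+X^4) (LB1 b k) * dt (X^3+X^4)) +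
        (subst2 (X^2) (X^3+X^4) (LA2 b l) * dt (X^2) +
          subst2 (X^2) (X^3+X^4) (LB2 b l) * dt (X^3+X^4)) := by
      rw [subst2_add, subst2_add]; ring
    rw [e, w1_gen2, add_zero]
    exact w1_gen1 b k
  · have e : subst2 (X^2) (C b * X^3) (LA1 b k + LA2 b l) * dt (X^2) +
        subst2 (X^2) (C b * X^3) (LB1 b k + LB2 b l) * dt (C b * X^3) =
        (subst2 (X^2) (C b * X^3) (LA1 b k) * dt (X^2) +
          subst2 (X^2) (C b * X^3) (LB1 b k) * dt (C b * X^3)) +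
        (subst2 (X^2) (C b * X^3) (LA2 b l) * dt (X^2) +
          subst2 (X^2) (C b * X^3) (LB2 b l) * dt (C b * X^3)) := by
      rw [subst2_add, subst2_add]; ring
    rw [e, w2_gen1, zero_add]
    exact w2_gen2 b hb l

-- ======================= block 10: Λ ⊆ : coefficients of forms =======================

lemma coeffW_b1 (A B : MvPowerSeries (Fin 2) ℂ) (k : ℕ) (hk : k ≤ 4) :
    PowerSeries.coeff k (subst2 (X^2) (X^3+X^4) A * dt (X^2) +
      subst2 (X^2) (X^3+X^4) B * dt (X^3+X^4)) =
    [0, 2*cf A 0 0, 3*cf B 0 0, 2*cf A 1 0 + 4*cf B 0 0,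
      2*cf A 0 1 + 3*cf B 1 0].getD k 0 := by
  rw [dt_x1, dt_y1, mul_add, map_add, map_add, coeff_mul_CX, coeff_mul_CX, coeff_mul_CX]
  interval_cases k <;>
    norm_num [coeff0_b1, coeff1_b1, coeff2_b1, coeff3_b1]

lemma coeffW_b2 (b : ℂ) (A B : MvPowerSeries (Fin 2) ℂ) (k : ℕ) (hk : k ≤ 4) :
    PowerSeries.coeff k (subst2 (X^2) (C b * X^3) A * dt (X^2) +
      subst2 (X^2) (C b * X^3) B * dt (C b * X^3)) =
    [0, 2*cf A 0 0, 3*b*cf B 0 0, 2*cf A 1 0,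
      b*(2*cf A 0 1 + 3*cf B 1 0)].getD k 0 := by
  rw [dt_x1, dt_y2, map_add, coeff_mul_CX, coeff_mul_CX]
  interval_cases k <;>
    · norm_num [coeff0_b2, coeff1_b2, coeff2_b2, coeff3_b2]
      try ring


-- ======================= block 11: Λ ⊆ =======================

lemma lambda_sub (b : ℂ) (hb : b ≠ 0) (p : ℕ × ℕ)
    (hp : p ∈ lambdaTwo (X ^ 2) (X ^ 3 + X ^ 4) (X ^ 2) (C b * X ^ 3)) :
    p = (2, 2) ∨ p = (3, 3) ∨ p = (4, 4) ∨ p = (5, 5) ∨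
      ∃ k l : ℕ, p = (6 + k, 6 + l) := by
  obtain ⟨d1, d2⟩ := p
  obtain ⟨A, B, hne1, hne2, ho1, ho2⟩ := hp
  simp only at ho1 ho2
  have w10 : PowerSeries.coeff 0 (subst2 (X^2) (X^3+X^4) A * dt (X^2) +
      subst2 (X^2) (X^3+X^4) B * dt (X^3+X^4)) = 0 := by
    simpa using coeffW_b1 A B 0 (by norm_num)
  have w11 : PowerSeries.coeff 1 (subst2 (X^2) (X^3+X^4) A * dt (X^2) +
      subst2 (X^2) (X^3+X^4) B * dt (X^3+X^4)) = 2*cf A 0 0 := by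
    simpa using coeffW_b1 A B 1 (by norm_num)
  have w12 : PowerSeries.coeff 2 (subst2 (X^2) (X^3+X^4) A * dt (X^2) +
      subst2 (X^2) (X^3+X^4) B * dt (X^3+X^4)) = 3*cf B 0 0 := by
    simpa using coeffW_b1 A B 2 (by norm_num)
  have w13 : PowerSeries.coeff 3 (subst2 (X^2) (X^3+X^4) A * dt (X^2) +
      subst2 (X^2) (X^3+X^4) B * dt (X^3+X^4)) = 2*cf A 1 0 + 4*cf B 0 0 := by
    simpa using coeffW_b1 A B 3 (by norm_num)
  have w14 : PowerSeries.coeff 4 (subst2 (X^2) (X^3+X^4) A * dt (X^2) +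
      subst2 (X^2) (X^3+X^4) B * dt (X^3+X^4)) = 2*cf A 0 1 + 3*cf B 1 0 := by
    simpa using coeffW_b1 A B 4 (by norm_num)
  have w20 : PowerSeries.coeff 0 (subst2 (X^2) (C b * X^3) A * dt (X^2) +
      subst2 (X^2) (C b * X^3) B * dt (C b * X^3)) = 0 := by
    simpa using coeffW_b2 b A B 0 (by norm_num)
  have w21 : PowerSeries.coeff 1 (subst2 (X^2) (C b * X^3) A * dt (X^2) +
      subst2 (X^2) (C b * X^3) B * dt (C b * X^3)) = 2*cf A 0 0 := by
    simpa using coeffW_b2 b A B 1 (by norm_num)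
  have w22 : PowerSeries.coeff 2 (subst2 (X^2) (C b * X^3) A * dt (X^2) +
      subst2 (X^2) (C b * X^3) B * dt (C b * X^3)) = 3*b*cf B 0 0 := by
    simpa using coeffW_b2 b A B 2 (by norm_num)
  have w23 : PowerSeries.coeff 3 (subst2 (X^2) (C b * X^3) A * dt (X^2) +
      subst2 (X^2) (C b * X^3) B * dt (C b * X^3)) = 2*cf A 1 0 := by
    simpa using coeffW_b2 b A B 3 (by norm_num)
  have w24 : PowerSeries.coeff 4 (subst2 (X^2) (C b * X^3) A * dt (X^2) +
      subst2 (X^2) (C b * X^3) B * dt (C b * X^3)) = b*(2*cf A 0 1 + 3*cf B 1 0) := by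
    simpa using coeffW_b2 b A B 4 (by norm_num)
  by_cases hA : cf A 0 0 = 0
  case neg =>
    left
    have e1 : d1 = 2 := eq_of_coeffs_X ho1 (by rw [w11]; exact mul_ne_zero two_ne_zero hA)
      (by intro m hm; interval_cases m; exact w10)
    have e2 : d2 = 2 := eq_of_coeffs_X ho2 (by rw [w21]; exact mul_ne_zero two_ne_zero hA)
      (by intro m hm; interval_cases m; exact w20)
    simp [e1, e2]
  by_cases hB : cf B 0 0 = 0
  case neg =>
    right; left
    have e1 : d1 = 3 := eq_of_coeffs_X ho1
      (by rw [w12]; exact mul_ne_zero three_ne_zero hB)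
      (by intro m hm; interval_cases m
          · exact w10
          · rw [w11, hA, mul_zero])
    have e2 : d2 = 3 := eq_of_coeffs_X ho2
      (by rw [w22]; exact mul_ne_zero (mul_ne_zero three_ne_zero hb) hB)
      (by intro m hm; interval_cases m
          · exact w20
          · rw [w21, hA, mul_zero])
    simp [e1, e2]
  by_cases hA10 : cf A 1 0 = 0
  case neg =>
    right; right; left
    have e1 : d1 = 4 := eq_of_coeffs_X ho1
      (by rw [w13, hB]; simpa using mul_ne_zero two_ne_zero hA10)
      (by intro m hm; interval_cases m
          · exact w10
          · rw [w11, hA, mul_zero]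
          · rw [w12, hB, mul_zero])
    have e2 : d2 = 4 := eq_of_coeffs_X ho2
      (by rw [w23]; exact mul_ne_zero two_ne_zero hA10)
      (by intro m hm; interval_cases m
          · exact w20
          · rw [w21, hA, mul_zero]
          · rw [w22, hB, mul_zero])
    simp [e1, e2]
  by_cases hE : 2*cf A 0 1 + 3*cf B 1 0 = 0
  case neg =>
    right; right; right; left
    have e1 : d1 = 5 := eq_of_coeffs_X ho1 (by rw [w14]; exact hE)
      (by intro m hm; interval_cases m
          · exact w10
          · rw [w11, hA, mul_zero]
          · rw [w12, hB, mul_zero]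
          · rw [w13, hA10, hB]; ring)
    have e2 : d2 = 5 := eq_of_coeffs_X ho2 (by rw [w24]; exact mul_ne_zero hb hE)
      (by intro m hm; interval_cases m
          · exact w20
          · rw [w21, hA, mul_zero]
          · rw [w22, hB, mul_zero]
          · rw [w23, hA10, mul_zero])
    simp [e1, e2]
  right; right; right; right
  have e1 : 5 < d1 := ge_of_coeffs_X ho1
    (by intro m hm; interval_cases m
        · exact w10
        · rw [w11, hA, mul_zero]
        · rw [w12, hB, mul_zero]
        · rw [w13, hA10, hB]; ring
        · rw [w14]; exact hE)
  have e2 : 5 < d2 := ge_of_coeffs_X ho2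
    (by intro m hm; interval_cases m
        · exact w20
        · rw [w21, hA, mul_zero]
        · rw [w22, hB, mul_zero]
        · rw [w23, hA10, mul_zero]
        · rw [w24, hE, mul_zero])
  exact ⟨d1 - 6, d2 - 6, by simp; omega⟩

/-- The value set of 1-forms does not determine the value semigroup for plane
curves with two branches: for the curve `D_b` with branches
`φ₁(t₁) = (t₁², t₁³ + t₁⁴)` and `φ₂(t₂) = (t₂², b·t₂³)` (`b ≠ 0`), the set
`Λ_{D_b}` is independent of `b`, while `Γ_{D_b}` takes two different values
according to whether `b² = 1` or not. -/
theorem two_branches_lambda_not_determine_gamma :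
    (∀ b : ℂ, b ≠ 0 →
      lambdaTwo (PowerSeries.X ^ 2) (PowerSeries.X ^ 3 + PowerSeries.X ^ 4)
          (PowerSeries.X ^ 2) (PowerSeries.C b * PowerSeries.X ^ 3)
        = {p : ℕ × ℕ | p = (2, 2) ∨ p = (3, 3) ∨ p = (4, 4) ∨ p = (5, 5) ∨
            ∃ k l : ℕ, p = (6 + k, 6 + l)}) ∧
    (∀ b : ℂ, b ≠ 0 → b ^ 2 ≠ 1 →
      gammaTwo (PowerSeries.X ^ 2) (PowerSeries.X ^ 3 + PowerSeries.X ^ 4)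
          (PowerSeries.X ^ 2) (PowerSeries.C b * PowerSeries.X ^ 3)
        = {p : ℕ × ℕ | p = (0, 0) ∨ (∃ a : ℕ, 2 ≤ a ∧ a ≤ 7 ∧ p = (a, a)) ∨
            (∃ k : ℕ, p = (6, 6 + k)) ∨ (∃ k : ℕ, p = (6 + k, 6)) ∨
            ∃ k l : ℕ, p = (8 + k, 8 + l)}) ∧
    (∀ b : ℂ, b ≠ 0 → b ^ 2 = 1 →
      gammaTwo (PowerSeries.X ^ 2) (PowerSeries.X ^ 3 + PowerSeries.X ^ 4)
          (PowerSeries.X ^ 2) (PowerSeries.C b * PowerSeries.X ^ 3)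
        = {p : ℕ × ℕ | p = (0, 0) ∨ (∃ a : ℕ, 2 ≤ a ∧ a ≤ 8 ∧ p = (a, a)) ∨
            (∃ k : ℕ, p = (7, 7 + k)) ∨ (∃ k : ℕ, p = (7 + k, 7)) ∨
            ∃ k l : ℕ, p = (9 + k, 9 + l)}) ∧
    ∃ b b' : ℂ, b ≠ 0 ∧ b' ≠ 0 ∧
      lambdaTwo (PowerSeries.X ^ 2) (PowerSeries.X ^ 3 + PowerSeries.X ^ 4)
          (PowerSeries.X ^ 2) (PowerSeries.C b * PowerSeries.X ^ 3)
        = lambdaTwo (PowerSeries.X ^ 2) (PowerSeries.X ^ 3 + PowerSeries.X ^ 4)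
          (PowerSeries.X ^ 2) (PowerSeries.C b' * PowerSeries.X ^ 3) ∧
      gammaTwo (PowerSeries.X ^ 2) (PowerSeries.X ^ 3 + PowerSeries.X ^ 4)
          (PowerSeries.X ^ 2) (PowerSeries.C b * PowerSeries.X ^ 3)
        ≠ gammaTwo (PowerSeries.X ^ 2) (PowerSeries.X ^ 3 + PowerSeries.X ^ 4)
          (PowerSeries.X ^ 2) (PowerSeries.C b' * PowerSeries.X ^ 3) := by
  constructor
  · -- Λ is independent of b
    intro b hb
    ext p
    simp only [Set.mem_setOf_eq]
    constructor
    · exact lambda_sub b hb p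
    · rintro (rfl | rfl | rfl | rfl | ⟨k, l, rfl⟩)
      · simpa using lambda_small b hb 1 (by norm_num) (by norm_num)
      · simpa using lambda_small b hb 2 (by norm_num) (by norm_num)
      · simpa using lambda_small b hb 3 (by norm_num) (by norm_num)
      · simpa using lambda_small b hb 4 (by norm_num) (by norm_num)
      · exact lambda_big b hb k l
  refine ⟨?_, ?_, ?_⟩
  · -- Γ for b² ≠ 1
    intro b hb hb2
    ext p
    simp only [Set.mem_setOf_eq]
    constructor
    · exact gamma_sub_ne1 b hb hb2 p
    · rintro (rfl | ⟨a, ha2, ha7, rfl⟩ | ⟨k, rfl⟩ | ⟨k, rfl⟩ | ⟨k, l, rfl⟩)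
      · exact gamma_diag b hb 0 (by omega)
      · exact gamma_diag b hb a (by omega)
      · rcases Nat.eq_zero_or_pos k with rfl | hk
        · simpa using gamma_diag b hb 6 (by omega)
        · exact gamma_left b hb hb2 k hk
      · rcases Nat.eq_zero_or_pos k with rfl | hk
        · simpa using gamma_diag b hb 6 (by omega)
        · exact gamma_right b hb hb2 k hk
      · exact gamma_both b hb hb2 k l
  · -- Γ for b² = 1
    intro b hb hb2
    ext p
    simp only [Set.mem_setOf_eq]
    constructor
    · exact gamma_sub_eq1 b hb hb2 p
    · rintro (rfl | ⟨a, ha2, ha8, rfl⟩ | ⟨k, rfl⟩ | ⟨k, rfl⟩ | ⟨k, l, rfl⟩)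
      · exact gamma_diag b hb 0 (by omega)
      · exact gamma_diag b hb a (by omega)
      · rcases Nat.eq_zero_or_pos k with rfl | hk
        · simpa using gamma_diag b hb 7 (by omega)
        · exact gamma_left' b hb hb2 k hk
      · rcases Nat.eq_zero_or_pos k with rfl | hk
        · simpa using gamma_diag b hb 7 (by omega)
        · exact gamma_right' b hb hb2 k hk
      · exact gamma_both' b hb hb2 k l
  · -- the two invariants really differ
    refine ⟨2, 1, by norm_num, by norm_num, ?_, ?_⟩
    · ext p
      constructor
      · intro hp
        rcases lambda_sub 2 (by norm_num) p hp with rfl | rfl | rfl | rfl | ⟨k, l, rfl⟩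
        · simpa using lambda_small 1 (by norm_num) 1 (by norm_num) (by norm_num)
        · simpa using lambda_small 1 (by norm_num) 2 (by norm_num) (by norm_num)
        · simpa using lambda_small 1 (by norm_num) 3 (by norm_num) (by norm_num)
        · simpa using lambda_small 1 (by norm_num) 4 (by norm_num) (by norm_num)
        · exact lambda_big 1 (by norm_num) k l
      · intro hp
        rcases lambda_sub 1 (by norm_num) p hp with rfl | rfl | rfl | rfl | ⟨k, l, rfl⟩
        · simpa using lambda_small 2 (by norm_num) 1 (by norm_num) (by norm_num)
        · simpa using lambda_small 2 (by norm_num) 2 (by norm_num) (by norm_num)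
        · simpa using lambda_small 2 (by norm_num) 3 (by norm_num) (by norm_num)
        · simpa using lambda_small 2 (by norm_num) 4 (by norm_num) (by norm_num)
        · exact lambda_big 2 (by norm_num) k l
    · intro heq
      have hmem : ((6, 7) : ℕ × ℕ) ∈ gammaTwo (X ^ 2) (X ^ 3 + X ^ 4) (X ^ 2)
          (C (2:ℂ) * X ^ 3) := by
        simpa using gamma_left 2 (by norm_num) (by norm_num) 1 (by norm_num)
      rw [heq] at hmem
      rcases gamma_sub_eq1 1 (by norm_num) (by norm_num) _ hmem with
        h' | ⟨a, _, _, h'⟩ | ⟨k, h'⟩ | ⟨k, h'⟩ | ⟨k, l, h'⟩ <;>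
        simp only [Prod.mk.injEq] at h' <;> omega
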